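/- Let x̄ be an extremal and let θ ∈ [t₀,t₁), λ ∈ [0,1), ξ ∈ ℝⁿ, and suppose x̄ is continuously differentiable on [θ, θ+α) ⊆ [t₀,t₁]. Then for every ε > 0 with ε ≤ min{α, ε₀} (where θ + ε₀ < t₁), the following integral identity holds: ∫_θ^{θ+ε} [ L̄_x(t)ᵀ h⁺(t;θ,λ,ξ,ε) + L̄_y(t)ᵀ ḣ⁺(t;θ,λ,ξ,ε) ] dt = 0, where ḣ⁺(t;θ,λ,ξ,ε) = ξ on (θ, θ+λε), = (λ/(λ−1))ξ on (θ+λε, θ+ε), and = 0 outside [θ, θ+ε]. -/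

import Mathlib

open Set Filter Topology MeasureTheory Asymptotics

noncomputable section

namespace CV

abbrev Vec (n : ℕ) := EuclideanSpace ℝ (Fin n)

/-- `x` is piecewise-C¹ on `[t0,t1]` with (finite) corner set `S ⊆ (t0,t1)`. -/
def PiecewiseC1On {n : ℕ} (t0 t1 : ℝ) (x : ℝ → Vec n) (S : Finset ℝ) : Prop :=
  ContinuousOn x (Icc t0 t1) ∧ (↑S : Set ℝ) ⊆ Ioo t0 t1 ∧
  (∀ t ∈ Ioo t0 t1, t ∉ S → DifferentiableAt ℝ x t) ∧
  ContinuousOn (deriv x) (Ioo t0 t1 \ (↑S : Set ℝ)) ∧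
  (∀ s ∈ S, (∃ l, Tendsto (deriv x) (𝓝[<] s) (𝓝 l)) ∧
            (∃ l, Tendsto (deriv x) (𝓝[>] s) (𝓝 l))) ∧
  (∃ l, Tendsto (deriv x) (𝓝[>] t0) (𝓝 l)) ∧
  (∃ l, Tendsto (deriv x) (𝓝[<] t1) (𝓝 l))

/-- The functional `J(x) = ∫_{t0}^{t1} L(t, x(t), ẋ(t)) dt`. -/
def Jfun {n : ℕ} (L : ℝ → Vec n → Vec n → ℝ) (t0 t1 : ℝ) (x : ℝ → Vec n) : ℝ :=
  ∫ t in t0..t1, L t (x t) (deriv x t)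

def AdmissibleWith {n : ℕ} (t0 t1 : ℝ) (x0 x1 : Vec n) (x : ℝ → Vec n) (S : Finset ℝ) : Prop :=
  PiecewiseC1On t0 t1 x S ∧ x t0 = x0 ∧ x t1 = x1

def Admissible {n : ℕ} (t0 t1 : ℝ) (x0 x1 : Vec n) (x : ℝ → Vec n) : Prop :=
  ∃ S : Finset ℝ, AdmissibleWith t0 t1 x0 x1 x S

/-- partial derivative of `L` in the `x` variable, as a continuous linear functional. -/
def Lx {n : ℕ} (L : ℝ → Vec n → Vec n → ℝ) (t : ℝ) (x y : Vec n) : Vec n →L[ℝ] ℝ :=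
  fderiv ℝ (fun x' => L t x' y) x

/-- partial derivative of `L` in the `y` (velocity) variable. -/
def Ly {n : ℕ} (L : ℝ → Vec n → Vec n → ℝ) (t : ℝ) (x y : Vec n) : Vec n →L[ℝ] ℝ :=
  fderiv ℝ (fun y' => L t x y') y

/-- `x` is an extremal: it is admissible with corner set `S` and satisfies the Euler
equation at all non-corner interior points. -/
def IsExtremalWith {n : ℕ} (L : ℝ → Vec n → Vec n → ℝ) (t0 t1 : ℝ) (x0 x1 : Vec n)
    (x : ℝ → Vec n) (S : Finset ℝ) : Prop :=
  AdmissibleWith t0 t1 x0 x1 x S ∧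
  ∀ t ∈ Ioo t0 t1, t ∉ S →
    HasDerivAt (fun s => Ly L s (x s) (deriv x s)) (Lx L t (x t) (deriv x t)) t

def IsExtremal {n : ℕ} (L : ℝ → Vec n → Vec n → ℝ) (t0 t1 : ℝ) (x0 x1 : Vec n)
    (x : ℝ → Vec n) : Prop :=
  ∃ S : Finset ℝ, IsExtremalWith L t0 t1 x0 x1 x S

def IsStrongLocalMin {n : ℕ} (L : ℝ → Vec n → Vec n → ℝ) (t0 t1 : ℝ) (x0 x1 : Vec n)
    (xb : ℝ → Vec n) : Prop :=
  Admissible t0 t1 x0 x1 xb ∧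
  ∃ δ > (0 : ℝ), ∀ x : ℝ → Vec n, Admissible t0 t1 x0 x1 x →
    (∀ t ∈ Icc t0 t1, ‖x t - xb t‖ ≤ δ) → Jfun L t0 t1 xb ≤ Jfun L t0 t1 x

def IsWeakLocalMin {n : ℕ} (L : ℝ → Vec n → Vec n → ℝ) (t0 t1 : ℝ) (x0 x1 : Vec n)
    (xb : ℝ → Vec n) : Prop :=
  Admissible t0 t1 x0 x1 xb ∧
  ∃ δ > (0 : ℝ), ∀ x : ℝ → Vec n, Admissible t0 t1 x0 x1 x →
    (∀ t ∈ Icc t0 t1, ‖x t - xb t‖ ≤ δ) →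
    (∀ t ∈ Icc t0 t1, DifferentiableAt ℝ x t → DifferentiableAt ℝ xb t →
      ‖deriv x t - deriv xb t‖ ≤ δ) →
    Jfun L t0 t1 xb ≤ Jfun L t0 t1 x

/-- Weierstrass excess `E(L̄)(t,ξ)` along `xb`, computed with the derivative function `v`. -/
def excess {n : ℕ} (L : ℝ → Vec n → Vec n → ℝ) (xb v : ℝ → Vec n) (t : ℝ) (ξ : Vec n) : ℝ :=
  L t (xb t) (v t + ξ) - L t (xb t) (v t) - Ly L t (xb t) (v t) ξ

/-- `ηᵀ ΔL̄_x(t,ξ) = (L_x(t, x̄(t), v(t)+ξ) − L̄_x(t)) η`. -/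
def dLx {n : ℕ} (L : ℝ → Vec n → Vec n → ℝ) (xb v : ℝ → Vec n) (t : ℝ) (ξ η : Vec n) : ℝ :=
  Lx L t (xb t) (v t + ξ) η - Lx L t (xb t) (v t) η

/-- `ηᵀ L̄_xx(t,ξ) η`. -/
def Lxx2 {n : ℕ} (L : ℝ → Vec n → Vec n → ℝ) (xb v : ℝ → Vec n) (t : ℝ) (ξ η : Vec n) : ℝ :=
  fderiv ℝ (fun x' => Lx L t x' (v t + ξ) η) (xb t) η

/-- `ηᵀ L_yy(t,x,y) η` at a point. -/
def Lyy2At {n : ℕ} (L : ℝ → Vec n → Vec n → ℝ) (t : ℝ) (x y η : Vec n) : ℝ :=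
  fderiv ℝ (fun y' => Ly L t x y' η) y η

/-- `ηᵀ L̄_yy(t) η` along `xb`. -/
def Lyy2 {n : ℕ} (L : ℝ → Vec n → Vec n → ℝ) (xb v : ℝ → Vec n) (t : ℝ) (η : Vec n) : ℝ :=
  Lyy2At L t (xb t) (v t) η

/-- `ηᵀ (L̄_xy(t) ξ)` (mixed derivative: `y`-derivative of `ξᵀL_x` in direction `η`). -/
def Lxy2 {n : ℕ} (L : ℝ → Vec n → Vec n → ℝ) (xb v : ℝ → Vec n) (t : ℝ) (ξ η : Vec n) : ℝ :=
  fderiv ℝ (fun y' => Lx L t (xb t) y' ξ) (v t) η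

/-- third directional derivative `D³_y L(t,x,·)[η,η,η]` at the point `y`. -/
def D3yAt {n : ℕ} (L : ℝ → Vec n → Vec n → ℝ) (t : ℝ) (x y η : Vec n) : ℝ :=
  fderiv ℝ (fun y' => Lyy2At L t x y' η) y η

def D3y {n : ℕ} (L : ℝ → Vec n → Vec n → ℝ) (xb v : ℝ → Vec n) (t : ℝ) (η : Vec n) : ℝ :=
  D3yAt L t (xb t) (v t) η

/-- `Q_i(t,λ,ξ)`. -/
def Qi {n : ℕ} (L : ℝ → Vec n → Vec n → ℝ) (xb v : ℝ → Vec n) (i : ℕ) (t lam : ℝ)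
    (ξ : Vec n) : ℝ :=
  lam ^ i * excess L xb v t ξ + (1 - lam ^ i) * excess L xb v t ((lam / (lam - 1)) • ξ)

/-- `M_i(t,λ,ξ)`. -/
def Mi {n : ℕ} (L : ℝ → Vec n → Vec n → ℝ) (xb v : ℝ → Vec n) (i : ℕ) (t lam : ℝ)
    (ξ : Vec n) : ℝ :=
  lam ^ i * dLx L xb v t ξ ξ
    + (1 - lam) * (1 / 2 + lam) ^ (i - 1) * dLx L xb v t ((lam / (lam - 1)) • ξ) ξ

/-- `W(θ,λ,ξ) = λ M₁ + (d/dt) Q₂`, with the `t`-derivative taken within the set `s`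
(one-sidedly where needed). -/
def Wfun {n : ℕ} (L : ℝ → Vec n → Vec n → ℝ) (xb v : ℝ → Vec n) (s : Set ℝ) (θ lam : ℝ)
    (ξ : Vec n) : ℝ :=
  lam * Mi L xb v 1 θ lam ξ + derivWithin (fun t => Qi L xb v 2 t lam ξ) s θ

/-- `G(θ,λ,ξ)`. -/
def Gfun {n : ℕ} (L : ℝ → Vec n → Vec n → ℝ) (xb v : ℝ → Vec n) (s : Set ℝ) (θ lam : ℝ)
    (ξ : Vec n) : ℝ :=
  lam ^ 2 * (lam * Lxx2 L xb v θ ξ ξ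
      + (1 - lam) * Lxx2 L xb v θ ((lam / (lam - 1)) • ξ) ξ)
    + 2 * lam * derivWithin (fun t => Mi L xb v 2 t lam ξ) s θ
    + derivWithin (derivWithin (fun t => Qi L xb v 3 t lam ξ) s) s θ

/-- `K(θ,ε,ξ)`. -/
def Kfun {n : ℕ} (L : ℝ → Vec n → Vec n → ℝ) (xb v : ℝ → Vec n) (s : Set ℝ) (θ ε : ℝ)
    (ξ : Vec n) : ℝ :=
  (dLx L xb v θ ξ ξ - Lxy2 L xb v θ ξ ξ)
    + derivWithin (fun t => excess L xb v t ξ) s θ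
    + ((1 + ε) / (2 * (1 - ε))) * derivWithin (fun t => Lyy2 L xb v t ξ) s θ

/-- the right variation `h⁺(t; θ, λ, ξ, ε)`. -/
def hplus {n : ℕ} (θ lam : ℝ) (ξ : Vec n) (ε t : ℝ) : Vec n :=
  if t ∈ Ico θ (θ + lam * ε) then (t - θ) • ξ
  else if t ∈ Ico (θ + lam * ε) (θ + ε) then ((lam / (lam - 1)) * (t - θ - ε)) • ξ
  else 0

/-- the left variation `h⁻(t; θ, λ, ξ, ε)`. -/
def hminus {n : ℕ} (θ lam : ℝ) (ξ : Vec n) (ε t : ℝ) : Vec n :=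
  if t ∈ Ioc (θ - lam * ε) θ then (t - θ) • ξ
  else if t ∈ Ioc (θ - ε) (θ - lam * ε) then ((lam / (lam - 1)) * (t - θ + ε)) • ξ
  else 0

def xplus {n : ℕ} (xb : ℝ → Vec n) (θ lam : ℝ) (ξ : Vec n) (ε : ℝ) : ℝ → Vec n :=
  fun t => xb t + hplus θ lam ξ ε t

def xminus {n : ℕ} (xb : ℝ → Vec n) (θ lam : ℝ) (ξ : Vec n) (ε : ℝ) : ℝ → Vec n :=
  fun t => xb t + hminus θ lam ξ ε t

/-- `x` is `k` times differentiable on `s` (derivatives taken within `s`);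
`DiffOnN x s 1` says `x` is C¹ on `s`. -/
def DiffOnN {n : ℕ} (x : ℝ → Vec n) (s : Set ℝ) : ℕ → Prop
  | 0 => ContinuousOn x s
  | (k + 1) => DifferentiableOn ℝ x s ∧ DiffOnN (derivWithin x s) s k

/-- the domain `(a,b) × ℝⁿ × ℝⁿ` of the integrand. -/
def LDomain (a b : ℝ) (n : ℕ) : Set (ℝ × Vec n × Vec n) :=
  (Ioo a b) ×ˢ (univ : Set (Vec n × Vec n))

def uncurryL {n : ℕ} (L : ℝ → Vec n → Vec n → ℝ) : ℝ × Vec n × Vec n → ℝ :=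
  fun p => L p.1 p.2.1 p.2.2

def uncurryLx {n : ℕ} (L : ℝ → Vec n → Vec n → ℝ) : ℝ × Vec n × Vec n → (Vec n →L[ℝ] ℝ) :=
  fun p => Lx L p.1 p.2.1 p.2.2

def uncurryLy {n : ℕ} (L : ℝ → Vec n → Vec n → ℝ) : ℝ × Vec n × Vec n → (Vec n →L[ℝ] ℝ) :=
  fun p => Ly L p.1 p.2.1 p.2.2

/-- the derivative `ḣ⁺(t; θ, λ, ξ, ε)` of the right variation. -/
def hplusDeriv {n : ℕ} (θ lam : ℝ) (ξ : Vec n) (ε t : ℝ) : Vec n :=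
  if t ∈ Ioo θ (θ + lam * ε) then ξ
  else if t ∈ Ioo (θ + lam * ε) (θ + ε) then (lam / (lam - 1)) • ξ
  else 0

/-- FTC-2 allowing a finite exceptional set where the derivative is unknown. -/
lemma ftc_finset (T : Finset ℝ) :
    ∀ (F f : ℝ → ℝ) (u v : ℝ), u ≤ v →
      ContinuousOn F (Icc u v) →
      (∀ x ∈ Ioo u v, x ∉ T → HasDerivAt F (f x) x) →
      IntervalIntegrable f MeasureTheory.volume u v →
      (∫ x in u..v, f x) = F v - F u := by
  induction T using Finset.strongInduction with
  | _ T ih =>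
    intro F f u v huv hcont hderiv hint
    by_cases hex : ∃ m ∈ T, m ∈ Ioo u v
    · obtain ⟨m, hmT, hm⟩ := hex
      have hmuv : m ∈ uIcc u v := by rw [uIcc_of_le huv]; exact ⟨hm.1.le, hm.2.le⟩
      have hint1 := hint.mono_set (uIcc_subset_uIcc left_mem_uIcc hmuv)
      have hint2 := hint.mono_set (uIcc_subset_uIcc hmuv right_mem_uIcc)
      have h1 := ih (T.erase m) (Finset.erase_ssubset hmT) F f u m hm.1.le
        (hcont.mono (Icc_subset_Icc le_rfl hm.2.le))
        (fun x hx hxT => hderiv x ⟨hx.1, hx.2.trans hm.2⟩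
          (fun hxT' => hxT (Finset.mem_erase.2 ⟨ne_of_lt hx.2, hxT'⟩)))
        hint1
      have h2 := ih (T.erase m) (Finset.erase_ssubset hmT) F f m v hm.2.le
        (hcont.mono (Icc_subset_Icc hm.1.le le_rfl))
        (fun x hx hxT => hderiv x ⟨hm.1.trans hx.1, hx.2⟩
          (fun hxT' => hxT (Finset.mem_erase.2 ⟨ne_of_gt hx.1, hxT'⟩)))
        hint2
      rw [← intervalIntegral.integral_add_adjacent_intervals hint1 hint2, h1, h2]
      ring
    · push_neg at hex
      exact intervalIntegral.integral_eq_sub_of_hasDeriv_right_of_le huv hcont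
        (fun x hx => (hderiv x hx (fun h => hex x h hx)).hasDerivWithinAt) hint

/-- closed form for `hplus` when `0 < λ < 1`. -/
lemma hplus_eq {n : ℕ} (θ lam ε : ℝ) (ξ : Vec n) (h0 : 0 < lam) (h1 : lam < 1) (hε : 0 < ε)
    (t : ℝ) :
    hplus θ lam ξ ε t = max 0 (min (t - θ) ((lam / (lam - 1)) * (t - θ - ε))) • ξ := by
  have hne : lam - 1 < 0 := by linarith
  have hr : lam / (lam - 1) < 0 := div_neg_of_pos_of_neg h0 hne
  unfold hplus
  by_cases hA : t ∈ Ico θ (θ + lam * ε)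
  · rw [if_pos hA]
    obtain ⟨ha', hb'⟩ := hA
    have h2 : t - θ ≤ lam / (lam - 1) * (t - θ - ε) := by
      rw [div_mul_eq_mul_div, le_div_iff_of_neg hne]
      nlinarith
    rw [min_eq_left h2, max_eq_right (by linarith)]
  · by_cases hB : t ∈ Ico (θ + lam * ε) (θ + ε)
    · rw [if_neg hA, if_pos hB]
      obtain ⟨ha', hb'⟩ := hB
      have e1 : lam / (lam - 1) * (t - θ - ε) ≤ t - θ := by
        rw [div_mul_eq_mul_div, div_le_iff_of_neg hne]
        nlinarith
      have e2 : 0 ≤ lam / (lam - 1) * (t - θ - ε) := by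
        nlinarith [mul_pos_of_neg_of_neg hr (show t - θ - ε < 0 by linarith)]
      rw [min_eq_right e1, max_eq_right e2]
    · rw [if_neg hA, if_neg hB]
      have hcase : t < θ ∨ θ + ε ≤ t := by
        by_contra hc
        push_neg at hc
        rcases lt_or_ge t (θ + lam * ε) with h | h
        · exact hA ⟨hc.1, h⟩
        · exact hB ⟨h, hc.2⟩
      rcases hcase with h | h
      · rw [max_eq_left ((min_le_left _ _).trans (by linarith)), zero_smul]
      · rw [max_eq_left ((min_le_right _ _).trans (by
          nlinarith [mul_nonneg (neg_nonneg.2 hr.le) (show (0:ℝ) ≤ t - θ - ε by linarith)])),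
          zero_smul]

lemma hplus_continuous {n : ℕ} (θ lam ε : ℝ) (ξ : Vec n) (h0 : 0 < lam) (h1 : lam < 1)
    (hε : 0 < ε) : Continuous (hplus θ lam ξ ε) := by
  have h : hplus θ lam ξ ε
      = fun t => max 0 (min (t - θ) ((lam / (lam - 1)) * (t - θ - ε))) • ξ :=
    funext (hplus_eq θ lam ε ξ h0 h1 hε)
  rw [h]
  fun_prop

/-- **Equation (2.3)**: along an extremal, the first-variation integral of the right
variation `h⁺` vanishes, for all sufficiently small `ε > 0`. -/
theorem eq2_3 {n : ℕ} {a t0 t1 b : ℝ} (ha : a < t0) (ht : t0 < t1) (hb : t1 < b)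
    (x0 x1 : Vec n) (L : ℝ → Vec n → Vec n → ℝ)
    (hL : ContDiffOn ℝ 1 (uncurryL L) (LDomain a b n))
    (xb : ℝ → Vec n) (hext : IsExtremal L t0 t1 x0 x1 xb)
    (θ : ℝ) (hθ : θ ∈ Ico t0 t1) (lam : ℝ) (hlam : lam ∈ Ico (0 : ℝ) 1) (ξ : Vec n)
    (α : ℝ) (hα : 0 < α) (hsub : Ico θ (θ + α) ⊆ Icc t0 t1)
    (hC1 : DiffOnN xb (Ico θ (θ + α)) 1)
    (ε0 : ℝ) (hε0 : 0 < ε0) (hε0' : θ + ε0 < t1) :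
    ∀ ε : ℝ, 0 < ε → ε ≤ min α ε0 →
      (∫ t in θ..(θ + ε),
        ((Lx L t (xb t) (deriv xb t)) (hplus θ lam ξ ε t)
          + (Ly L t (xb t) (deriv xb t)) (hplusDeriv θ lam ξ ε t))) = 0 := by
  intro ε hε hεle
  obtain ⟨S, ⟨⟨hpc1, hxb0, hxb1⟩, hEuler⟩⟩ := hext
  obtain ⟨hxbcont, hS_sub, hxbdiff, hdcont, hcorner, hlim0, hlim1⟩ := hpc1
  obtain ⟨hlam0, hlam1⟩ := hlam
  rcases hlam0.eq_or_lt with hlam00 | hlam0'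
  · -- trivial case λ = 0 : the variation vanishes identically
    have h1 : ∀ t, hplus θ lam ξ ε t = 0 := by
      intro t; simp [hplus, ← hlam00]
    have h2 : ∀ t, hplusDeriv θ lam ξ ε t = 0 := by
      intro t; simp [hplusDeriv, ← hlam00]
    simp [h1, h2]
  · -- main case 0 < λ < 1
    have hεα : ε ≤ α := le_trans hεle (min_le_left _ _)
    have hεε0 : ε ≤ ε0 := le_trans hεle (min_le_right _ _)
    have hθc : θ < θ + lam * ε := lt_add_of_pos_right _ (mul_pos hlam0' hε)
    have hcd : θ + lam * ε < θ + ε := by nlinarith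
    have hθd : θ < θ + ε := by linarith
    have hθ0 : t0 ≤ θ := hθ.1
    have hdt1 : θ + ε < t1 := lt_of_le_of_lt (by linarith) hε0'
    have hdα : θ + ε ≤ θ + α := by linarith
    have hIccsub : Icc θ (θ + ε) ⊆ Icc t0 t1 := Icc_subset_Icc hθ0 hdt1.le
    have hIab : ∀ t ∈ Icc θ (θ + ε), t ∈ Ioo a b := fun t ht =>
      ⟨lt_of_lt_of_le ha (hθ0.trans ht.1), lt_of_le_of_lt ht.2 (hdt1.trans hb)⟩
    -- the (one-sided) derivative of xb, continuous on [θ, θ+α)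
    have hwcont : ContinuousOn (derivWithin xb (Ico θ (θ + α))) (Ico θ (θ + α)) := hC1.2
    have hw_eq : ∀ t ∈ Ioo θ (θ + α), derivWithin xb (Ico θ (θ + α)) t = deriv xb t := by
      intro t ht
      exact derivWithin_of_mem_nhds
        (mem_nhds_iff.2 ⟨Ioo θ (θ + α), Ioo_subset_Ico_self, isOpen_Ioo, ht⟩)
    -- left limit of the derivative at θ+ε
    have hd_mem : (θ + ε) ∈ Ioo t0 t1 := ⟨lt_of_le_of_lt hθ0 hθd, hdt1⟩
    have hlimd : ∃ l, Tendsto (deriv xb) (𝓝[<] (θ + ε)) (𝓝 l) := by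
      by_cases hdS : (θ + ε) ∈ S
      · exact (hcorner _ hdS).1
      · refine ⟨deriv xb (θ + ε), ?_⟩
        have hopen2 : IsOpen (Ioo t0 t1 \ (S : Set ℝ)) :=
          isOpen_Ioo.sdiff (S.finite_toSet.isClosed)
        have hmem2 : (θ + ε) ∈ Ioo t0 t1 \ (S : Set ℝ) := ⟨hd_mem, hdS⟩
        exact ((hdcont _ hmem2).continuousAt (hopen2.mem_nhds hmem2)).mono_left
          nhdsWithin_le_nhds
    obtain ⟨l, hl⟩ := hlimd
    -- a continuous representative of the derivative on [θ, θ+ε]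
    set v : ℝ → Vec n :=
      fun t => if t < θ + ε then derivWithin xb (Ico θ (θ + α)) t else l with hv_def
    have hv_deriv : ∀ t ∈ Ioo θ (θ + ε), v t = deriv xb t := by
      intro t ht
      have ht' : t ∈ Ioo θ (θ + α) := ⟨ht.1, lt_of_lt_of_le ht.2 hdα⟩
      simp only [hv_def]
      rw [if_pos ht.2]
      exact hw_eq t ht'
    have hv_d : v (θ + ε) = l := by simp [hv_def]
    have hv_tendsto : Tendsto v (𝓝[<] (θ + ε)) (𝓝 l) := by
      refine Tendsto.congr' ?_ hl
      filter_upwards [Ioo_mem_nhdsLT_of_mem (⟨hθd, le_rfl⟩ : (θ + ε) ∈ Ioc θ (θ + ε))] with s hs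
      exact (hv_deriv s hs).symm
    have hvcont : ContinuousOn v (Icc θ (θ + ε)) := by
      intro t ht
      rcases eq_or_lt_of_le ht.2 with htd | htd
      · rw [htd]
        have h2 : ContinuousWithinAt v (Ico θ (θ + ε)) (θ + ε) := by
          have : Tendsto v (𝓝[Ico θ (θ + ε)] (θ + ε)) (𝓝 (v (θ + ε))) := by
            rw [hv_d, nhdsWithin_Ico_eq_nhdsLT hθd]
            exact hv_tendsto
          exact this
        exact continuousWithinAt_diff_self.1 (by rwa [Icc_sdiff_right])
      · have htα : t < θ + α := lt_of_lt_of_le htd hdα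
        have hwt : ContinuousWithinAt (derivWithin xb (Ico θ (θ + α))) (Icc θ (θ + ε)) t := by
          have base := hwcont t ⟨ht.1, htα⟩
          have hfil : 𝓝[Icc θ (θ + ε)] t ≤ 𝓝[Ico θ (θ + α)] t := by
            rw [nhdsWithin_restrict' (Icc θ (θ + ε)) (Iio_mem_nhds htα)]
            exact nhdsWithin_mono t (fun x hx => ⟨hx.1.1, hx.2⟩)
          exact base.mono_left hfil
        refine hwt.congr_of_eventuallyEq ?_ ?_
        · filter_upwards [mem_nhdsWithin_of_mem_nhds (Iio_mem_nhds htd)] with s hs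
          exact if_pos hs
        · simp only [hv_def]
          rw [if_pos htd]
    -- the full derivative of L and the partial-derivative identities
    have hopenD : IsOpen (LDomain a b n) := isOpen_Ioo.prod isOpen_univ
    have hDcont : ContinuousOn (fderiv ℝ (uncurryL L)) (LDomain a b n) :=
      hL.continuousOn_fderiv_of_isOpen hopenD le_rfl
    have hkey : ∀ (t : ℝ) (x y : Vec n), t ∈ Ioo a b → ∀ u z : Vec n,
        Lx L t x y u + Ly L t x y z = (fderiv ℝ (uncurryL L) (t, x, y)) (0, u, z) := by
      intro t x y htab u z
      have hq : ((t, x, y) : ℝ × Vec n × Vec n) ∈ LDomain a b n := ⟨htab, mem_univ _⟩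
      have hD : DifferentiableAt ℝ (uncurryL L) (t, x, y) :=
        (hL.differentiableOn one_ne_zero).differentiableAt (hopenD.mem_nhds hq)
      have hgx : HasFDerivAt (fun x' : Vec n => ((t, x', y) : ℝ × Vec n × Vec n))
          ((0 : Vec n →L[ℝ] ℝ).prod
            ((ContinuousLinearMap.id ℝ (Vec n)).prod (0 : Vec n →L[ℝ] Vec n))) x :=
        HasFDerivAt.prodMk (hasFDerivAt_const t x) (HasFDerivAt.prodMk (hasFDerivAt_id x) (hasFDerivAt_const y x))
      have hgy : HasFDerivAt (fun y' : Vec n => ((t, x, y') : ℝ × Vec n × Vec n))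
          ((0 : Vec n →L[ℝ] ℝ).prod
            ((0 : Vec n →L[ℝ] Vec n).prod (ContinuousLinearMap.id ℝ (Vec n)))) y :=
        HasFDerivAt.prodMk (hasFDerivAt_const t y) (HasFDerivAt.prodMk (hasFDerivAt_const x y) (hasFDerivAt_id y))
      have hx : HasFDerivAt (fun x' : Vec n => L t x' y)
          ((fderiv ℝ (uncurryL L) (t, x, y)).comp
            ((0 : Vec n →L[ℝ] ℝ).prod
              ((ContinuousLinearMap.id ℝ (Vec n)).prod (0 : Vec n →L[ℝ] Vec n)))) x :=
        by have := hD.hasFDerivAt.comp x hgx; exact this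
      have hy : HasFDerivAt (fun y' : Vec n => L t x y')
          ((fderiv ℝ (uncurryL L) (t, x, y)).comp
            ((0 : Vec n →L[ℝ] ℝ).prod
              ((0 : Vec n →L[ℝ] Vec n).prod (ContinuousLinearMap.id ℝ (Vec n))))) y :=
        by have := hD.hasFDerivAt.comp y hgy; exact this
      unfold Lx Ly
      rw [hx.fderiv, hy.fderiv]
      rw [ContinuousLinearMap.comp_apply, ContinuousLinearMap.comp_apply, ← map_add]
      congr 1
      simp [Prod.mk_add_mk]
    have hkeyY : ∀ (t : ℝ) (x y : Vec n), t ∈ Ioo a b → ∀ z : Vec n,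
        Ly L t x y z = (fderiv ℝ (uncurryL L) (t, x, y)) (0, 0, z) := by
      intro t x y htab z
      have h := hkey t x y htab 0 z
      rwa [map_zero, zero_add] at h
    -- continuity ingredients on [θ, θ+ε]
    have hxb_c : ContinuousOn xb (Icc θ (θ + ε)) := hxbcont.mono hIccsub
    have hpcont : ContinuousOn (fun t => ((t, xb t, v t) : ℝ × Vec n × Vec n))
        (Icc θ (θ + ε)) := continuousOn_id.prodMk (hxb_c.prodMk hvcont)
    have hmaps : MapsTo (fun t => ((t, xb t, v t) : ℝ × Vec n × Vec n))
        (Icc θ (θ + ε)) (LDomain a b n) := fun t ht => ⟨hIab t ht, mem_univ _⟩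
    have hDcomp : ContinuousOn (fun t => fderiv ℝ (uncurryL L) (t, xb t, v t))
        (Icc θ (θ + ε)) := hDcont.comp hpcont hmaps
    have hplus_c : Continuous (hplus θ lam ξ ε) := hplus_continuous θ lam ε ξ hlam0' hlam1 hε
    have hp_theta : hplus θ lam ξ ε θ = 0 := by
      unfold hplus
      rw [if_pos ⟨le_rfl, hθc⟩]
      simp
    have hp_d : hplus θ lam ξ ε (θ + ε) = 0 := by
      unfold hplus
      rw [if_neg (fun h => absurd h.2 (not_lt.2 hcd.le)), if_neg (fun h => lt_irrefl _ h.2)]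
    -- continuity of F
    have hFG : EqOn (fun t => (Ly L t (xb t) (deriv xb t)) (hplus θ lam ξ ε t))
        (fun t => (fderiv ℝ (uncurryL L) (t, xb t, v t))
          (((0 : ℝ), (0 : Vec n), hplus θ lam ξ ε t) : ℝ × Vec n × Vec n))
        (Icc θ (θ + ε)) := by
      intro t ht
      dsimp only
      rcases eq_or_lt_of_le ht.1 with h1 | h1
      · rw [← h1, hp_theta,
          show (((0 : ℝ), (0 : Vec n), (0 : Vec n)) : ℝ × Vec n × Vec n) = 0 from rfl,
          map_zero, map_zero]
      · rcases eq_or_lt_of_le ht.2 with h2 | h2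
        · rw [h2, hp_d,
            show (((0 : ℝ), (0 : Vec n), (0 : Vec n)) : ℝ × Vec n × Vec n) = 0 from rfl,
            map_zero, map_zero]
        · rw [hkeyY t (xb t) (deriv xb t) (hIab t ht) (hplus θ lam ξ ε t),
            hv_deriv t ⟨h1, h2⟩]
    have hFcont : ContinuousOn
        (fun t => (Ly L t (xb t) (deriv xb t)) (hplus θ lam ξ ε t)) (Icc θ (θ + ε)) := by
      refine ContinuousOn.congr ?_ hFG
      exact hDcomp.clm_apply
        ((continuous_const.prodMk (continuous_const.prodMk hplus_c)).continuousOn)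
    -- the derivative identity away from corners and the kink
    have hFderiv : ∀ t ∈ Ioo θ (θ + ε), t ∉ (insert (θ + lam * ε) S) →
        HasDerivAt (fun s => (Ly L s (xb s) (deriv xb s)) (hplus θ lam ξ ε s))
          ((Lx L t (xb t) (deriv xb t)) (hplus θ lam ξ ε t)
            + (Ly L t (xb t) (deriv xb t)) (hplusDeriv θ lam ξ ε t)) t := by
      intro t ht htE
      rw [Finset.mem_insert] at htE
      push_neg at htE
      obtain ⟨htc, htS⟩ := htE
      have htI : t ∈ Ioo t0 t1 := ⟨lt_of_le_of_lt hθ0 ht.1, lt_trans ht.2 hdt1⟩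
      have hΦ := hEuler t htI htS
      have hh : HasDerivAt (hplus θ lam ξ ε) (hplusDeriv θ lam ξ ε t) t := by
        rcases lt_or_gt_of_ne htc with hlt | hgt
        · have hmem : Ioo θ (θ + lam * ε) ∈ 𝓝 t := isOpen_Ioo.mem_nhds ⟨ht.1, hlt⟩
          have hlin : HasDerivAt (fun s => (s - θ) • ξ) ξ t := by
            have h' := ((hasDerivAt_id t).sub_const θ).smul_const ξ
            rwa [one_smul] at h'
          have heq : hplus θ lam ξ ε =ᶠ[𝓝 t] fun s => (s - θ) • ξ := by
            filter_upwards [hmem] with s hs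
            unfold hplus
            rw [if_pos ⟨hs.1.le, hs.2⟩]
          have hd' : hplusDeriv θ lam ξ ε t = ξ := by
            unfold hplusDeriv
            rw [if_pos ⟨ht.1, hlt⟩]
          rw [hd']
          exact hlin.congr_of_eventuallyEq heq
        · have hmem : Ioo (θ + lam * ε) (θ + ε) ∈ 𝓝 t := isOpen_Ioo.mem_nhds ⟨hgt, ht.2⟩
          have hlin : HasDerivAt (fun s => ((lam / (lam - 1)) * (s - θ - ε)) • ξ)
              ((lam / (lam - 1)) • ξ) t := by
            have h' := (HasDerivAt.const_mul (lam / (lam - 1))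
              (((hasDerivAt_id t).sub_const θ).sub_const ε)).smul_const ξ
            rwa [mul_one] at h'
          have heq : hplus θ lam ξ ε =ᶠ[𝓝 t] fun s => ((lam / (lam - 1)) * (s - θ - ε)) • ξ := by
            filter_upwards [hmem] with s hs
            unfold hplus
            rw [if_neg (fun hm => absurd hm.2 (not_lt.2 hs.1.le)), if_pos ⟨hs.1.le, hs.2⟩]
          have hd' : hplusDeriv θ lam ξ ε t = (lam / (lam - 1)) • ξ := by
            unfold hplusDeriv
            rw [if_neg (fun hm => absurd hm.2 (not_lt.2 hgt.le)), if_pos ⟨hgt, ht.2⟩]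
          rw [hd']
          exact hlin.congr_of_eventuallyEq heq
      exact hΦ.clm_apply hh
    -- integrability of the integrand
    have hint1 : IntervalIntegrable
        (fun t => (Lx L t (xb t) (deriv xb t)) (hplus θ lam ξ ε t)
          + (Ly L t (xb t) (deriv xb t)) (hplusDeriv θ lam ξ ε t))
        MeasureTheory.volume θ (θ + lam * ε) := by
      have hg1cont : ContinuousOn
          (fun t => (fderiv ℝ (uncurryL L) (t, xb t, v t))
            (((0 : ℝ), hplus θ lam ξ ε t, ξ) : ℝ × Vec n × Vec n)) (Icc θ (θ + lam * ε)) :=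
        (hDcomp.mono (Icc_subset_Icc le_rfl hcd.le)).clm_apply
          ((continuous_const.prodMk (hplus_c.prodMk continuous_const)).continuousOn)
      have hg1int : IntervalIntegrable _ MeasureTheory.volume θ (θ + lam * ε) :=
        hg1cont.intervalIntegrable_of_Icc hθc.le
      rw [intervalIntegrable_iff_integrableOn_Ioo_of_le hθc.le] at hg1int ⊢
      refine hg1int.congr_fun ?_ measurableSet_Ioo
      intro t ht
      have htIoo : t ∈ Ioo θ (θ + ε) := ⟨ht.1, lt_trans ht.2 hcd⟩
      have hz : hplusDeriv θ lam ξ ε t = ξ := by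
        unfold hplusDeriv
        rw [if_pos ⟨ht.1, ht.2⟩]
      dsimp only
      rw [hkey t (xb t) (deriv xb t) (hIab t ⟨htIoo.1.le, htIoo.2.le⟩)
        (hplus θ lam ξ ε t) (hplusDeriv θ lam ξ ε t), hz, hv_deriv t htIoo]
    have hint2 : IntervalIntegrable
        (fun t => (Lx L t (xb t) (deriv xb t)) (hplus θ lam ξ ε t)
          + (Ly L t (xb t) (deriv xb t)) (hplusDeriv θ lam ξ ε t))
        MeasureTheory.volume (θ + lam * ε) (θ + ε) := by
      have hg2cont : ContinuousOn
          (fun t => (fderiv ℝ (uncurryL L) (t, xb t, v t))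
            (((0 : ℝ), hplus θ lam ξ ε t, (lam / (lam - 1)) • ξ) : ℝ × Vec n × Vec n))
          (Icc (θ + lam * ε) (θ + ε)) :=
        (hDcomp.mono (Icc_subset_Icc hθc.le le_rfl)).clm_apply
          ((continuous_const.prodMk (hplus_c.prodMk continuous_const)).continuousOn)
      have hg2int : IntervalIntegrable _ MeasureTheory.volume (θ + lam * ε) (θ + ε) :=
        hg2cont.intervalIntegrable_of_Icc hcd.le
      rw [intervalIntegrable_iff_integrableOn_Ioo_of_le hcd.le] at hg2int ⊢
      refine hg2int.congr_fun ?_ measurableSet_Ioo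
      intro t ht
      have htIoo : t ∈ Ioo θ (θ + ε) := ⟨lt_trans hθc ht.1, ht.2⟩
      have hz : hplusDeriv θ lam ξ ε t = (lam / (lam - 1)) • ξ := by
        unfold hplusDeriv
        rw [if_neg (fun hm => absurd hm.2 (not_lt.2 ht.1.le)), if_pos ⟨ht.1, ht.2⟩]
      dsimp only
      rw [hkey t (xb t) (deriv xb t) (hIab t ⟨htIoo.1.le, htIoo.2.le⟩)
        (hplus θ lam ξ ε t) (hplusDeriv θ lam ξ ε t), hz, hv_deriv t htIoo]
    have hFint := hint1.trans hint2
    -- apply the fundamental theorem of calculus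
    have hFTC := ftc_finset (insert (θ + lam * ε) S)
      (fun t => (Ly L t (xb t) (deriv xb t)) (hplus θ lam ξ ε t))
      (fun t => (Lx L t (xb t) (deriv xb t)) (hplus θ lam ξ ε t)
        + (Ly L t (xb t) (deriv xb t)) (hplusDeriv θ lam ξ ε t))
      θ (θ + ε) hθd.le hFcont hFderiv hFint
    rw [hFTC]
    simp [hp_d, hp_theta]
end CV
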